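/- Let p be a prime number, let H be a subgroup of 𝔽_p^×, and let a ∈ 𝔽_p^×. Then |∑_{y∈H} e(ay/p)| ≤ √p. -/

import Mathlib

/-- `eChar p x` is `e(x/p) = exp(2πi x̃/p)` where `x̃` is the integer representative of `x`. -/
noncomputable def eChar (p : ℕ) (x : ZMod p) : ℂ :=
  Complex.exp (2 * Real.pi * Complex.I * (x.val : ℂ) / p)

section Aux

variable (p : ℕ) [Fact p.Prime]

lemma eChar_eq_stdAddChar (x : ZMod p) : eChar p x = ZMod.stdAddChar x := by
  rw [ZMod.stdAddChar_apply, ZMod.toCircle_apply, eChar]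

lemma conj_stdAddChar (x : ZMod p) :
    (starRingEnd ℂ) (ZMod.stdAddChar x) = ZMod.stdAddChar (-x) := by
  rw [ZMod.stdAddChar_apply, ZMod.stdAddChar_apply, AddChar.map_neg_eq_inv,
    Circle.coe_inv_eq_conj]

lemma orth (t : ZMod p) :
    ∑ i : ZMod p, ZMod.stdAddChar (t * i) = if t = 0 then (p : ℂ) else 0 := by
  split_ifs with h
  · simp [h, Finset.card_univ]
  · exact AddChar.sum_eq_zero_of_ne_one (ZMod.isPrimitive_stdAddChar p h)

end Aux

open scoped Classical in
/-- For `p` prime, `H` a subgroup of `𝔽_p^×` and `a ∈ 𝔽_p^×`, one has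
`|∑_{y∈H} e(ay/p)| ≤ √p`. -/
theorem subgroup_sum_le_sqrt (p : ℕ) [Fact p.Prime] (H : Subgroup (ZMod p)ˣ)
    (a : (ZMod p)ˣ) :
    ‖∑ y : H, eChar p ((a * (y : (ZMod p)ˣ) : (ZMod p)ˣ) : ZMod p)‖
      ≤ Real.sqrt p := by
  set ψ := ZMod.stdAddChar (N := p) with hψ
  set f : ZMod p → ℂ := fun t => ∑ y : H, ψ (t * ((y : (ZMod p)ˣ) : ZMod p)) with hf
  -- the target sum equals `f a`
  have key : (∑ y : H, eChar p ((a * (y : (ZMod p)ˣ) : (ZMod p)ˣ) : ZMod p)) = f a := by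
    simp only [hf, hψ, eChar_eq_stdAddChar, Units.val_mul]
  rw [key]
  have hcard : 0 < (Nat.card H : ℝ) := by
    have : 0 < Nat.card H := Nat.card_pos
    exact_mod_cast this
  -- invariance: f (a*h) = f a for h ∈ H
  have hinv : ∀ h : H, f ((a * (h : (ZMod p)ˣ) : (ZMod p)ˣ) : ZMod p) = f a := by
    intro h
    simp only [hf, Units.val_mul]
    refine Fintype.sum_equiv (Equiv.mulLeft h) _ _ ?_
    intro y
    congr 1
    simp only [Equiv.coe_mulLeft, Submonoid.coe_mul, Subgroup.coe_mul, Units.val_mul]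
    ring
  -- Parseval: ∑ t, |f t|^2 = p * |H|
  have parseval : ∑ t : ZMod p, (‖f t‖)^2 = (p : ℝ) * Nat.card H := by
    have : ∑ t : ZMod p, (f t * (starRingEnd ℂ) (f t)) = (p : ℂ) * Nat.card H := by
      have expand : ∀ t : ZMod p, f t * (starRingEnd ℂ) (f t)
          = ∑ y : H, ∑ z : H, ψ (t * (((y : (ZMod p)ˣ) : ZMod p)
              - ((z : (ZMod p)ˣ) : ZMod p))) := by
        intro t
        rw [hf, map_sum, Finset.sum_mul_sum]
        refine Finset.sum_congr rfl fun y _ => Finset.sum_congr rfl fun z _ => ?_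
        rw [conj_stdAddChar, ← AddChar.map_add_eq_mul]
        congr 1
        ring
      calc ∑ t : ZMod p, f t * (starRingEnd ℂ) (f t)
          = ∑ y : H, ∑ z : H, ∑ t : ZMod p, ψ (t * (((y : (ZMod p)ˣ) : ZMod p)
              - ((z : (ZMod p)ˣ) : ZMod p))) := by
            simp only [expand]
            rw [Finset.sum_comm]
            exact Finset.sum_congr rfl fun y _ => Finset.sum_comm
        _ = ∑ y : H, ∑ z : H, ∑ t : ZMod p,
              ψ ((((y : (ZMod p)ˣ) : ZMod p) - ((z : (ZMod p)ˣ) : ZMod p)) * t) := by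
            simp only [mul_comm]
        _ = ∑ y : H, ∑ z : H, if (((y : (ZMod p)ˣ) : ZMod p)
              - ((z : (ZMod p)ˣ) : ZMod p)) = 0 then (p : ℂ) else 0 := by
            refine Finset.sum_congr rfl fun y _ => Finset.sum_congr rfl fun z _ => ?_
            exact orth p _
        _ = ∑ y : H, ∑ z : H, if y = z then (p : ℂ) else 0 := by
            refine Finset.sum_congr rfl fun y _ => Finset.sum_congr rfl fun z _ => ?_
            by_cases h : y = z
            · simp [h]
            · have hne : ((y : (ZMod p)ˣ) : ZMod p) ≠ ((z : (ZMod p)ˣ) : ZMod p) :=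
                fun hc => h (Subtype.ext (Units.ext hc))
              rw [if_neg (fun hc => hne (sub_eq_zero.mp hc)), if_neg h]
        _ = (p : ℂ) * Nat.card H := by
            simp [Finset.sum_ite_eq, Finset.card_univ, Nat.card_eq_fintype_card, mul_comm]
    have habs : ∑ t : ZMod p, ((‖f t‖ : ℂ))^2
        = ∑ t : ZMod p, f t * (starRingEnd ℂ) (f t) :=
      Finset.sum_congr rfl fun t _ => by
        rw [Complex.mul_conj, ← Complex.sq_norm]; norm_cast
    have h3 : ((∑ t : ZMod p, (‖f t‖)^2 : ℝ) : ℂ)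
        = (((p : ℝ) * Nat.card H : ℝ) : ℂ) := by
      push_cast
      rw [habs, this]
    exact_mod_cast h3
  -- |H| * |f a|^2 ≤ ∑ t |f t|^2
  have hle : (Nat.card H : ℝ) * (‖f a‖)^2
      ≤ ∑ t : ZMod p, (‖f t‖)^2 := by
    have := Finset.sum_le_univ_sum_of_nonneg
      (f := fun t : ZMod p => (‖f t‖)^2)
      (s := Finset.univ.image (fun h : H => ((a * (h : (ZMod p)ˣ) : (ZMod p)ˣ) : ZMod p)))
      (fun t => sq_nonneg _)
    refine le_trans (le_of_eq ?_) this
    rw [Finset.sum_image]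
    · rw [Finset.sum_congr rfl (fun h _ => by rw [hinv h])]
      simp [Nat.card_eq_fintype_card, Finset.card_univ, mul_comm]
    · intro x _ y _ hxy
      have : (a * (x : (ZMod p)ˣ) : (ZMod p)ˣ) = (a * (y : (ZMod p)ˣ) : (ZMod p)ˣ) :=
        Units.ext hxy
      have := mul_left_cancel this
      exact Subtype.ext this
  rw [parseval] at hle
  have h2 : (‖f a‖)^2 ≤ (p : ℝ) := by
    nlinarith
  have := Real.sqrt_le_sqrt h2
  rwa [Real.sqrt_sq (norm_nonneg _)] at this
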